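/- Let (ℰ,𝓗) be a closed bilinear form on 𝓛 with constants α₀, K and associated resolvent (G_α)_{α>α₀}. Let (T_t)_{t≥0} be a strongly continuous semigroup on 𝓛 with ‖e^{−α₀ t}T_t‖_op ≤ 1 such that G_α f = ∫₀^∞ e^{−α t} T_t f dt for all f ∈ 𝓛 and α > α₀, and let A be the generator of (T_t) with domain D(A). Then D(A) ⊆ 𝓗, and for every u ∈ D(A) and every v ∈ 𝓗, ℰ(u,v) = −⟨Au, v⟩_𝓛. -/

import Mathlib

open Filter Topology
open scoped RealInnerProductSpace

noncomputable section

/-- The `𝓗`-norm associated to a bilinear form `E` with constant `α₀`: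
`‖u‖_𝓗 = (ℰ^s_{α₀+1}(u,u))^{1/2} = (E(u,u) + (α₀+1)⟨u,u⟩_𝓛)^{1/2}`. -/
def Hnorm {L : Type*} [NormedAddCommGroup L] [InnerProductSpace ℝ L]
    (E : L → L → ℝ) (α₀ : ℝ) (u : L) : ℝ :=
  Real.sqrt (E u u + (α₀ + 1) * ⟪u, u⟫)

/-- `(ℰ, 𝓗)` is a closed bilinear form on the real Hilbert space `L` with constants
`α₀ ∈ ℝ` and `K ≥ 1`: `𝓗` is a dense subspace, `E` is bilinear on `𝓗`, the symmetric part
`ℰ^s_{α₀}` is positive (hence `ℰ^s_{α₀+1}` is positive definite and dominates the `𝓛`-norm),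
`𝓗` is complete for the `𝓗`-norm (ℰ.1), and the weak sector condition (ℰ.2) holds. -/
structure IsClosedForm {L : Type*} [NormedAddCommGroup L] [InnerProductSpace ℝ L]
    (E : L → L → ℝ) (H : Submodule ℝ L) (α₀ K : ℝ) : Prop where
  one_le_K : 1 ≤ K
  dense_dom : Dense (H : Set L)
  add_left : ∀ u v w : L, u ∈ H → v ∈ H → w ∈ H → E (u + v) w = E u w + E v w
  add_right : ∀ u v w : L, u ∈ H → v ∈ H → w ∈ H → E u (v + w) = E u v + E u w
  smul_left : ∀ (c : ℝ) (u v : L), u ∈ H → v ∈ H → E (c • u) v = c * E u v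
  smul_right : ∀ (c : ℝ) (u v : L), u ∈ H → v ∈ H → E u (c • v) = c * E u v
  nonneg : ∀ u ∈ H, 0 ≤ E u u + α₀ * ⟪u, u⟫
  hilbert : ∀ u : ℕ → L, (∀ n, u n ∈ H) →
      (∀ ε > (0:ℝ), ∃ N : ℕ, ∀ m ≥ N, ∀ n ≥ N, Hnorm E α₀ (u m - u n) < ε) →
      ∃ l ∈ H, Tendsto (fun n => Hnorm E α₀ (u n - l)) atTop (𝓝 0)
  sector : ∀ u ∈ H, ∀ v ∈ H,
      |E u v + (α₀ + 1) * ⟪u, v⟫| ≤ K * Hnorm E α₀ u * Hnorm E α₀ v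

/-- `Θ(u) = sup { ℰ_{α₀+1}(v,u) : v ∈ 𝓗, ‖v‖_𝓗 = 1 }`. -/
def Theta {L : Type*} [NormedAddCommGroup L] [InnerProductSpace ℝ L]
    (E : L → L → ℝ) (H : Submodule ℝ L) (α₀ : ℝ) (u : L) : ℝ :=
  sSup {x : ℝ | ∃ v ∈ H, Hnorm E α₀ v = 1 ∧ x = E v u + (α₀ + 1) * ⟪v, u⟫}

/-- `(G_α)_{α > α₀}` is the resolvent associated to the closed form `(ℰ,𝓗)`:
`G_α(𝓛) ⊆ 𝓗`, `ℰ_α(G_α f, u) = ⟨f,u⟩_𝓛` for all `f ∈ 𝓛`, `u ∈ 𝓗`, the resolvent equation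
`G_α − G_β + (α−β) G_α G_β = 0` holds, and `‖(α−α₀) G_α f‖_𝓛 ≤ ‖f‖_𝓛`. -/
def IsResolventOf {L : Type*} [NormedAddCommGroup L] [InnerProductSpace ℝ L]
    (E : L → L → ℝ) (H : Submodule ℝ L) (α₀ : ℝ) (G : ℝ → L →ₗ[ℝ] L) : Prop :=
  (∀ α, α₀ < α → ∀ f : L, G α f ∈ H) ∧
  (∀ α, α₀ < α → ∀ f : L, ∀ u ∈ H, E (G α f) u + α * ⟪G α f, u⟫ = ⟪f, u⟫) ∧
  (∀ α β, α₀ < α → α₀ < β → ∀ f : L, G α f - G β f + (α - β) • G α (G β f) = 0) ∧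
  (∀ α, α₀ < α → ∀ f : L, ‖(α - α₀) • G α f‖ ≤ ‖f‖)

open Filter Topology MeasureTheory in
private lemma semigroup_strong_cont
    {L : Type*} [NormedAddCommGroup L] [InnerProductSpace ℝ L] [CompleteSpace L]
    (α₀ : ℝ)
    (T : ℝ → L →L[ℝ] L)
    (hT0 : T 0 = ContinuousLinearMap.id ℝ L)
    (hTsemi : ∀ s ≥ (0:ℝ), ∀ t ≥ (0:ℝ), T (s + t) = (T s).comp (T t))
    (hTcont : ∀ f : L, Tendsto (fun t : ℝ => T t f) (𝓝[>] (0:ℝ)) (𝓝 f))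
    (hTnorm : ∀ t > (0:ℝ), ‖T t‖ ≤ Real.exp (α₀ * t)) :
    ∀ v : L, ∀ t₀ ∈ Set.Ici (0:ℝ), ContinuousWithinAt (fun t => T t v) (Set.Ici 0) t₀ := by
  have hTop : ∀ t ≥ (0:ℝ), ‖T t‖ ≤ max 1 (Real.exp (α₀ * t)) := by
    intro t ht
    rcases eq_or_lt_of_le ht with h | h
    · rw [← h, hT0]
      exact le_trans (ContinuousLinearMap.norm_id_le) (le_max_left _ _)
    · exact le_trans (hTnorm t h) (le_max_right _ _)
  intro v t₀ ht₀
  have h0 : Tendsto (fun s : ℝ => T s v) (𝓝[Set.Ici (0:ℝ)] 0) (𝓝 v) := by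
    have hset : Set.Ici (0:ℝ) = {0} ∪ Set.Ioi 0 := by
      ext x; simp [le_iff_lt_or_eq, or_comm, eq_comm]
    rw [hset, nhdsWithin_union, nhdsWithin_singleton, tendsto_sup]
    refine ⟨?_, hTcont v⟩
    have : (fun s : ℝ => T s v) 0 = v := by simp [hT0]
    simpa [this] using (tendsto_pure_nhds (fun s : ℝ => T s v) 0)
  have habs : Tendsto (fun t : ℝ => |t - t₀|) (𝓝[Set.Ici (0:ℝ)] t₀) (𝓝[Set.Ici (0:ℝ)] 0) := by
    apply tendsto_nhdsWithin_of_tendsto_nhds_of_eventually_within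
    · have : Tendsto (fun t : ℝ => |t - t₀|) (𝓝 t₀) (𝓝 |t₀ - t₀|) :=
        ((continuous_id.sub continuous_const).abs).tendsto t₀
      simpa using this.mono_left nhdsWithin_le_nhds
    · filter_upwards with t using Set.mem_Ici.mpr (abs_nonneg _)
  have hg : Tendsto (fun t : ℝ => ‖T (|t - t₀|) v - v‖) (𝓝[Set.Ici (0:ℝ)] t₀) (𝓝 0) := by
    exact tendsto_iff_norm_sub_tendsto_zero.mp (h0.comp habs)
  set C : ℝ := max 1 (Real.exp (|α₀| * t₀)) with hC
  rw [ContinuousWithinAt, tendsto_iff_norm_sub_tendsto_zero]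
  apply squeeze_zero' (Eventually.of_forall fun t => norm_nonneg _)
    ?_ (by simpa using hg.const_mul C)
  filter_upwards [self_mem_nhdsWithin] with t (ht : (0:ℝ) ≤ t)
  have hexpC : ∀ s : ℝ, 0 ≤ s → s ≤ t₀ → max 1 (Real.exp (α₀ * s)) ≤ C := by
    intro s hs hst
    apply max_le_max le_rfl
    apply Real.exp_le_exp.mpr
    calc α₀ * s ≤ |α₀| * s := by
          apply mul_le_mul_of_nonneg_right (le_abs_self _) hs
      _ ≤ |α₀| * t₀ := by apply mul_le_mul_of_nonneg_left hst (abs_nonneg _)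
  rcases le_or_gt t₀ t with hle | hlt
  · have hsem : T t v = T t₀ (T (t - t₀) v) := by
      have := hTsemi t₀ ht₀ (t - t₀) (by linarith)
      rw [show t₀ + (t - t₀) = t by ring] at this
      rw [this]; rfl
    have : T t v - T t₀ v = T t₀ (T (t - t₀) v - v) := by rw [hsem, map_sub]
    rw [this, abs_of_nonneg (by linarith : (0:ℝ) ≤ t - t₀)]
    calc ‖T t₀ (T (t - t₀) v - v)‖ ≤ ‖T t₀‖ * ‖T (t - t₀) v - v‖ :=
          (T t₀).le_opNorm _
      _ ≤ C * ‖T (t - t₀) v - v‖ := by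
          apply mul_le_mul_of_nonneg_right _ (norm_nonneg _)
          exact le_trans (le_trans (hTop t₀ ht₀) (by
            apply max_le_max le_rfl
            exact Real.exp_le_exp.mpr (mul_le_mul_of_nonneg_right (le_abs_self _) ht₀)))
            le_rfl
  · have hsem : T t₀ v = T t (T (t₀ - t) v) := by
      have := hTsemi t ht (t₀ - t) (by linarith)
      rw [show t + (t₀ - t) = t₀ by ring] at this
      rw [this]; rfl
    have heq : T t v - T t₀ v = T t (v - T (t₀ - t) v) := by rw [hsem, map_sub]
    rw [heq, abs_of_nonpos (by linarith : t - t₀ ≤ 0)]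
    rw [show -(t - t₀) = t₀ - t by ring]
    calc ‖T t (v - T (t₀ - t) v)‖ ≤ ‖T t‖ * ‖v - T (t₀ - t) v‖ := (T t).le_opNorm _
      _ ≤ C * ‖T (t₀ - t) v - v‖ := by
          rw [norm_sub_rev]
          apply mul_le_mul_of_nonneg_right _ (norm_nonneg _)
          exact le_trans (hTop t ht) (hexpC t ht hlt.le)

open MeasureTheory in
/-- Let `(ℰ,𝓗)` be a closed form with resolvent `(G_α)`, and let `(T_t)` be
a strongly continuous semigroup with `‖e^{−α₀ t}T_t‖ ≤ 1` whose Laplace transform is `(G_α)`,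
with generator `A`.  Then `D(A) ⊆ 𝓗` and `ℰ(u,v) = −⟨Au, v⟩_𝓛` for `u ∈ D(A)`, `v ∈ 𝓗`:
here `u ∈ D(A)` with `Au = w` means `t⁻¹(T_t u − u) → w` as `t ↓ 0`. -/
theorem form_eq_neg_inner_generator
    {L : Type*} [NormedAddCommGroup L] [InnerProductSpace ℝ L] [CompleteSpace L]
    [TopologicalSpace.SeparableSpace L]
    (E : L → L → ℝ) (H : Submodule ℝ L) (α₀ K : ℝ)
    (hcf : IsClosedForm E H α₀ K)
    (G : ℝ → L →ₗ[ℝ] L) (hG : IsResolventOf E H α₀ G)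
    (T : ℝ → L →L[ℝ] L)
    (hT0 : T 0 = ContinuousLinearMap.id ℝ L)
    (hTsemi : ∀ s ≥ (0:ℝ), ∀ t ≥ (0:ℝ), T (s + t) = (T s).comp (T t))
    (hTcont : ∀ f : L, Tendsto (fun t : ℝ => T t f) (𝓝[>] (0:ℝ)) (𝓝 f))
    (hTnorm : ∀ t > (0:ℝ), ‖T t‖ ≤ Real.exp (α₀ * t))
    (hLaplace : ∀ α > α₀, ∀ f : L,
      G α f = ∫ t in Set.Ioi (0:ℝ), Real.exp (-α * t) • T t f)
    (u w : L)
    (hu : Tendsto (fun t : ℝ => t⁻¹ • (T t u - u)) (𝓝[>] (0:ℝ)) (𝓝 w)) :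
    u ∈ H ∧ ∀ v ∈ H, E u v = -⟪w, v⟫ := by
  classical
  obtain ⟨hG1, hG2, -, hG4⟩ := hG
  have hcont : ∀ v : L, ∀ t₀ ∈ Set.Ici (0:ℝ), ContinuousWithinAt (fun t => T t v) (Set.Ici 0) t₀ :=
    semigroup_strong_cont α₀ T hT0 hTsemi hTcont hTnorm

  set α : ℝ := α₀ + 1 with hαdef
  have hαgt : α₀ < α := by simp [hαdef]
  -- the integrand
  set f : ℝ → L := fun t => Real.exp (-α * t) • T t u with hfdef
  have hfcont : ∀ t₀ ∈ Set.Ici (0:ℝ), ContinuousWithinAt f (Set.Ici 0) t₀ := by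
    intro t₀ ht₀
    exact (((Real.continuous_exp.comp (continuous_const.mul continuous_id)).continuousWithinAt)).smul
      (hcont u t₀ ht₀)
  have hfbound : ∀ t : ℝ, 0 < t → ‖f t‖ ≤ Real.exp (-t) * ‖u‖ := by
    intro t ht
    have h1 : ‖f t‖ = Real.exp (-α * t) * ‖T t u‖ := by
      rw [hfdef]; simp [norm_smul, Real.abs_exp]
    rw [h1]
    calc Real.exp (-α * t) * ‖T t u‖ ≤ Real.exp (-α * t) * (Real.exp (α₀ * t) * ‖u‖) := by
          apply mul_le_mul_of_nonneg_left _ (Real.exp_pos _).le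
          exact le_trans ((T t).le_opNorm u)
            (mul_le_mul_of_nonneg_right (hTnorm t ht) (norm_nonneg u))
      _ = Real.exp (-t) * ‖u‖ := by
          rw [← mul_assoc, ← Real.exp_add]
          congr 2
          simp [hαdef]; ring
  have hfint : IntegrableOn f (Set.Ioi (0:ℝ)) := by
    apply Integrable.mono' ((exp_neg_integrableOn_Ioi 0 one_pos).mul_const ‖u‖)
    · have hco : ContinuousOn f (Set.Ioi 0) :=
        fun t ht => (hfcont t (Set.mem_Ici.mpr (le_of_lt ht))).mono Set.Ioi_subset_Ici_self
      exact hco.aestronglyMeasurable measurableSet_Ioi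
    · rw [ae_restrict_iff' measurableSet_Ioi]
      filter_upwards with t ht
      simpa using hfbound t ht
  have hfintIcc : ∀ h : ℝ, IntegrableOn f (Set.Ioc 0 h) :=
    fun h => hfint.mono_set Set.Ioc_subset_Ioi_self
  set J : ℝ → L := fun h => ∫ t in Set.Ioi h, f t with hJdef
  have hJ0 : J 0 = G α u := (hLaplace α hαgt u).symm
  -- shift identity
  have hshift : ∀ h : ℝ, 0 < h → G α (T h u) = Real.exp (α * h) • J h := by
    intro h hh
    rw [hLaplace α hαgt (T h u)]
    have e1 : Set.EqOn (fun t : ℝ => Real.exp (-α * t) • T t (T h u))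
        (fun t : ℝ => Real.exp (α * h) • f (t + h)) (Set.Ioi 0) := by
      intro t ht
      have hsem : T t (T h u) = T (t + h) u := by
        rw [hTsemi t (le_of_lt ht) h hh.le]; rfl
      simp only [hfdef, hsem, smul_smul, ← Real.exp_add]
      congr 2
      ring
    rw [setIntegral_congr_fun measurableSet_Ioi e1, integral_smul]
    congr 1
    -- ∫ t in Ioi 0, f (t+h) = ∫ t in Ioi h, f t
    show (∫ t in Set.Ioi (0:ℝ), f (t + h)) = ∫ t in Set.Ioi h, f t
    rw [← integral_indicator measurableSet_Ioi, ← integral_indicator measurableSet_Ioi]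
    rw [← integral_add_right_eq_self ((Set.Ioi h).indicator f) h]
    congr 1
    ext t
    by_cases ht : (0:ℝ) < t
    · rw [Set.indicator_of_mem (Set.mem_Ioi.mpr ht),
        Set.indicator_of_mem (Set.mem_Ioi.mpr (by linarith))]
    · rw [Set.indicator_of_notMem (by simp only [Set.mem_Ioi]; exact ht),
        Set.indicator_of_notMem (by simp only [Set.mem_Ioi, lt_add_iff_pos_left]; exact ht)]
  -- splitting
  have hsplit : ∀ h : ℝ, 0 < h → J 0 = (∫ t in Set.Ioc (0:ℝ) h, f t) + J h := by
    intro h hh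
    have : Set.Ioc (0:ℝ) h ∪ Set.Ioi h = Set.Ioi 0 := Set.Ioc_union_Ioi_eq_Ioi hh.le
    rw [hJdef]
    simp only
    rw [← this, setIntegral_union (Set.Ioc_disjoint_Ioi le_rfl) measurableSet_Ioi
      (hfintIcc h) (hfint.mono_set (by rw [← this]; exact Set.subset_union_right))]
  -- key algebraic identity for h > 0
  have hkey : ∀ᶠ h in 𝓝[>] (0:ℝ), G α (h⁻¹ • (T h u - u)) =
      (h⁻¹ * (Real.exp (α * h) - 1)) • J h - h⁻¹ • ∫ t in Set.Ioc (0:ℝ) h, f t := by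
    filter_upwards [self_mem_nhdsWithin] with h (hh : 0 < h)
    rw [_root_.map_smul, _root_.map_sub, hshift h hh, ← hJ0, hsplit h hh]
    module
  -- limit of LHS
  have hGcont : Continuous (G α) := by
    have hbound : ∀ v : L, ‖G α v‖ ≤ 1 * ‖v‖ := by
      intro v
      have := hG4 α hαgt v
      rw [show α - α₀ = 1 by simp [hαdef], one_smul] at this
      linarith
    exact AddMonoidHomClass.continuous_of_bound (G α) 1 hbound
  have hL : Tendsto (fun h : ℝ => G α (h⁻¹ • (T h u - u))) (𝓝[>] (0:ℝ)) (𝓝 (G α w)) :=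
    (hGcont.tendsto w).comp hu
  -- limit 1 : h⁻¹ (e^{αh} - 1) → α
  have lim1 : Tendsto (fun h : ℝ => h⁻¹ * (Real.exp (α * h) - 1)) (𝓝[>] (0:ℝ)) (𝓝 α) := by
    have hD : HasDerivAt (fun h : ℝ => Real.exp (α * h)) α 0 := by
      have := ((hasDerivAt_id (0:ℝ)).const_mul α).exp
      simpa using this
    have := hasDerivAt_iff_tendsto_slope.mp hD
    have h2 : Tendsto (slope (fun h : ℝ => Real.exp (α * h)) 0) (𝓝[>] (0:ℝ)) (𝓝 α) :=
      this.mono_left (nhdsWithin_mono 0 (fun x hx => by simpa using ne_of_gt hx))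
    apply h2.congr'
    filter_upwards [self_mem_nhdsWithin] with h (hh : 0 < h)
    rw [slope_def_field]
    simp
    ring
  -- limit 2 : J h → J 0
  have lim2 : Tendsto J (𝓝[>] (0:ℝ)) (𝓝 (J 0)) := by
    rw [tendsto_iff_norm_sub_tendsto_zero]
    apply squeeze_zero' (Eventually.of_forall fun t => norm_nonneg _)
      (g := fun h => ‖u‖ * h) ?_ ?_
    · filter_upwards [self_mem_nhdsWithin] with h (hh : 0 < h)
      have : J h - J 0 = -(∫ t in Set.Ioc (0:ℝ) h, f t) := by
        rw [hsplit h hh]; abel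
      rw [this, norm_neg]
      have hb : ∀ t ∈ Set.Ioc (0:ℝ) h, ‖f t‖ ≤ ‖u‖ := by
        intro t ht
        refine le_trans (hfbound t ht.1) ?_
        calc Real.exp (-t) * ‖u‖ ≤ 1 * ‖u‖ :=
            mul_le_mul_of_nonneg_right
              (Real.exp_le_one_iff.mpr (by linarith [ht.1])) (norm_nonneg u)
          _ = ‖u‖ := one_mul _
      have hvol : volume (Set.Ioc (0:ℝ) h) < ⊤ := by
        rw [Real.volume_Ioc]; exact ENNReal.ofReal_lt_top
      have := norm_setIntegral_le_of_norm_le_const hvol hb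
        (f := f) (s := Set.Ioc (0:ℝ) h)
      refine le_trans this ?_
      rw [Real.volume_real_Ioc_of_le (by linarith)]
      simp
    · have : Tendsto (fun h : ℝ => ‖u‖ * h) (𝓝 0) (𝓝 (‖u‖ * 0)) :=
        (continuous_const.mul continuous_id).tendsto 0
      simpa using this.mono_left nhdsWithin_le_nhds
  -- limit 3 : h⁻¹ • ∫_{Ioc 0 h} f → u
  have lim3 : Tendsto (fun h : ℝ => h⁻¹ • ∫ t in Set.Ioc (0:ℝ) h, f t) (𝓝[>] (0:ℝ)) (𝓝 u) := by
    have hiint : IntervalIntegrable f volume 0 0 := IntervalIntegrable.refl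
    have hmeas : StronglyMeasurableAtFilter f (𝓝[Set.Ioi (0:ℝ)] 0) :=
      ⟨Set.Ioi 0, self_mem_nhdsWithin, hfint.aestronglyMeasurable⟩
    have hD : HasDerivWithinAt (fun h : ℝ => ∫ x in (0:ℝ)..h, f x) (f 0) (Set.Ici 0) 0 :=
      intervalIntegral.integral_hasDerivWithinAt_right hiint hmeas
        ((hfcont 0 Set.self_mem_Ici).mono Set.Ioi_subset_Ici_self)
    have hf0 : f 0 = u := by simp [hfdef, hT0]
    have hslope := hasDerivWithinAt_iff_tendsto_slope.mp hD
    rw [Set.Ici_sdiff_left, hf0] at hslope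
    apply hslope.congr'
    filter_upwards [self_mem_nhdsWithin] with h (hh : 0 < h)
    rw [slope_def_module]
    simp only [sub_zero, intervalIntegral.integral_same, sub_zero]
    rw [intervalIntegral.integral_of_le hh.le]
  -- limit of RHS
  have hR : Tendsto (fun h : ℝ => (h⁻¹ * (Real.exp (α * h) - 1)) • J h
      - h⁻¹ • ∫ t in Set.Ioc (0:ℝ) h, f t) (𝓝[>] (0:ℝ)) (𝓝 (α • J 0 - u)) :=
    (lim1.smul lim2).sub lim3
  have hmain : G α w = α • G α u - u := by
    have h5 := tendsto_nhds_unique (hL.congr' hkey) hR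
    rw [hJ0] at h5
    exact h5
  have hres : G α (α • u - w) = u := by
    rw [_root_.map_sub, _root_.map_smul, hmain]
    abel
  constructor
  · have := hG1 α hαgt (α • u - w)
    rwa [hres] at this
  · intro v hv
    have h2 := hG2 α hαgt (α • u - w) v hv
    rw [hres] at h2
    have h3 : ⟪α • u - w, v⟫ = α * ⟪u, v⟫ - ⟪w, v⟫ := by
      rw [inner_sub_left, real_inner_smul_left]
    rw [h3] at h2
    linarith


end
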